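/- Let P ⊆ [[n]] be a poset normal in [[n]], λ ∈ S*_P, and η ∈ n*_P with supp(η) ⊆ coaux_P(λ). Then supp(λ) is the highest cover set of the poset P^{(λ,η)} generated by the cover set supp(λ + η). -/

import Mathlib

open scoped Classical

abbrev Mat (n : ℕ) (F : Type*) := Matrix (Fin n) (Fin n) F

/-- The set of positions strictly above the diagonal. -/
def PosUpper (n : ℕ) : Set (Fin n × Fin n) := {p | p.1 < p.2}

/-- A poset on `[n]`: a set of strictly-upper positions closed under composition. -/
def IsPoset {n : ℕ} (P : Set (Fin n × Fin n)) : Prop :=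
  P ⊆ PosUpper n ∧ ∀ i j k : Fin n, (i, j) ∈ P → (j, k) ∈ P → (i, k) ∈ P

/-- The normality condition for a pattern poset. -/
def NormalPoset {n : ℕ} (P : Set (Fin n × Fin n)) : Prop :=
  ∀ i j k l : Fin n, i ≤ j → j < k → k ≤ l → (i, l) ∉ P → (j, k) ∉ P

/-- The pattern group `U_P` (as a set of matrices). -/
def UPg {n : ℕ} {F : Type*} [Field F] (P : Set (Fin n × Fin n)) : Set (Mat n F) :=
  {g | (∀ i, g i i = 1) ∧ ∀ i j : Fin n, i ≠ j → (i, j) ∉ P → g i j = 0}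

/-- The algebra `n_P` of strictly upper triangular matrices supported on `P`. -/
def nPa {n : ℕ} {F : Type*} [Field F] (P : Set (Fin n × Fin n)) : Set (Mat n F) :=
  {X | ∀ i j : Fin n, (i, j) ∉ P → X i j = 0}

/-- The support of a matrix. -/
def msupp {n : ℕ} {F : Type*} [Field F] (X : Mat n F) : Set (Fin n × Fin n) :=
  {p | X p.1 p.2 ≠ 0}

/-- `F_q`-labeled set partitions: matrices in `n_P` with at most one nonzero entry
in each row and each column. -/
def SPa {n : ℕ} {F : Type*} [Field F] (P : Set (Fin n × Fin n)) : Set (Mat n F) :=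
  {X | X ∈ nPa P ∧ (∀ i j j' : Fin n, X i j ≠ 0 → X i j' ≠ 0 → j = j') ∧
       (∀ i i' j : Fin n, X i j ≠ 0 → X i' j ≠ 0 → i = i')}

/-- `coadj^L_Q(λ) = {(j,k) ∈ P : ∃ i, (i,k) ∈ supp(λ), (i,j) ∈ Q}`. -/
def coadjL {n : ℕ} {F : Type*} [Field F] (P Q : Set (Fin n × Fin n)) (lam : Mat n F) :
    Set (Fin n × Fin n) :=
  {p | p ∈ P ∧ ∃ i : Fin n, (i, p.2) ∈ msupp lam ∧ (i, p.1) ∈ Q}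

/-- `coadj^R_Q(λ) = {(i,j) ∈ P : ∃ k, (i,k) ∈ supp(λ), (j,k) ∈ Q}`. -/
def coadjR {n : ℕ} {F : Type*} [Field F] (P Q : Set (Fin n × Fin n)) (lam : Mat n F) :
    Set (Fin n × Fin n) :=
  {p | p ∈ P ∧ ∃ k : Fin n, (p.1, k) ∈ msupp lam ∧ (p.2, k) ∈ Q}

/-- `coadj_Q(λ) = coadj^L_Q(λ) ∪ coadj^R_Q(λ)`. -/
def coadjF {n : ℕ} {F : Type*} [Field F] (P Q : Set (Fin n × Fin n)) (lam : Mat n F) :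
    Set (Fin n × Fin n) := coadjL P Q lam ∪ coadjR P Q lam

/-- `coaux_P(λ) = coadj_{[[n]]}(λ) \ coadj_P(λ)`. -/
def coauxF {n : ℕ} {F : Type*} [Field F] (P : Set (Fin n × Fin n)) (lam : Mat n F) :
    Set (Fin n × Fin n) := coadjF P (PosUpper n) lam \ coadjF P P lam

/-- The set of covers of a poset `P`. -/
def covers {n : ℕ} (P : Set (Fin n × Fin n)) : Set (Fin n × Fin n) :=
  {p | p ∈ P ∧ ¬ ∃ j : Fin n, (p.1, j) ∈ P ∧ (j, p.2) ∈ P}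

/-- A set of positions is independent if no two distinct elements share a first
coordinate or a second coordinate. -/
def Indep {n : ℕ} (S : Finset (Fin n × Fin n)) : Prop :=
  ∀ p ∈ S, ∀ q ∈ S, p ≠ q → p.1 ≠ q.1 ∧ p.2 ≠ q.2

/-- The weakly decreasing sequence of lengths `j - i` over `(i,j) ∈ S`, padded with
zeros. -/
noncomputable def lenSeq {n : ℕ} (S : Finset (Fin n × Fin n)) : ℕ → ℕ :=
  fun m => (((S.val.map fun p => (p.2 : ℕ) - (p.1 : ℕ)).sort (· ≤ ·)).reverse.getD m 0)

/-- Lexicographic comparison of integer sequences. -/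
def lexGe (f g : ℕ → ℕ) : Prop :=
  f = g ∨ ∃ m : ℕ, (∀ i < m, f i = g i) ∧ g m < f m

/-- `S` is a highest cover set of the poset `P`. -/
def IsHighestCoverSet {n : ℕ} (P : Set (Fin n × Fin n)) (S : Finset (Fin n × Fin n)) : Prop :=
  ↑S ⊆ covers P ∧ Indep S ∧
    ∀ T : Finset (Fin n × Fin n), ↑T ⊆ covers P → Indep T → lexGe (lenSeq S) (lenSeq T)

/-- `P` decomposes into chains: there is a partition of `[n]` (given by a coloring)
such that `P` consists exactly of the pairs `i < j` lying in a common part. -/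
def DecomposesIntoChains {n : ℕ} (P : Set (Fin n × Fin n)) : Prop :=
  ∃ c : Fin n → Fin n, ∀ i j : Fin n, i < j → ((i, j) ∈ P ↔ c i = c j)

/-- `Q` is a `P`-representative poset. -/
def PRep {n : ℕ} (P Q : Set (Fin n × Fin n)) : Prop :=
  Q ⊆ P ∧ ∀ S : Finset (Fin n × Fin n), IsHighestCoverSet Q S →
    (∀ p ∈ S, ∀ j : Fin n, (p.1, j) ∈ covers Q → (j, p.2) ∉ P) ∧
    (∀ p ∈ S, ∀ j : Fin n, (j, p.2) ∈ covers Q → (p.1, j) ∉ P)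

/-- The poset generated by a cover set `S`: transitive closure of the relation `S`. -/
def posetOfCovers {n : ℕ} (S : Set (Fin n × Fin n)) : Set (Fin n × Fin n) :=
  {p | Relation.TransGen (fun a b : Fin n => (a, b) ∈ S) p.1 p.2}

/-- The support of a matrix, as a finset. -/
noncomputable def msuppF {n : ℕ} {F : Type*} [Field F] (X : Mat n F) :
    Finset (Fin n × Fin n) :=
  Finset.univ.filter fun p => X p.1 p.2 ≠ 0


/-! ### Auxiliary material for the proof -/

def plen {n : ℕ} (p : Fin n × Fin n) : ℕ := (p.2 : ℕ) - (p.1 : ℕ)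

lemma sort_max_cons {s : Multiset ℕ} {v : ℕ} (h : ∀ x ∈ s, x ≤ v) :
    (v ::ₘ s).sort (· ≤ ·) = s.sort (· ≤ ·) ++ [v] := by
  refine (fun hp h1 h2 => List.Perm.eq_of_pairwise' (r := (· ≤ · : ℕ → ℕ → Prop)) h1 h2 hp) ?_ ?_ ?_
  · rw [← Multiset.coe_eq_coe]
    have h2 : (↑(Multiset.sort s (fun x1 x2 => x1 ≤ x2) ++ [v]) : Multiset ℕ)
        = (Multiset.sort s (fun x1 x2 => x1 ≤ x2) : List ℕ) + ([v] : List ℕ) := rfl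
    rw [h2, Multiset.sort_eq, add_comm, Multiset.sort_eq]
    simp [← Multiset.singleton_add]
  · exact Multiset.pairwise_sort _ _
  · rw [List.pairwise_append]
    refine ⟨Multiset.pairwise_sort _ _, by simp, ?_⟩
    intro x hx y hy
    simp at hy; subst hy
    exact h x (by simpa using hx)

lemma lenSeq_empty {n : ℕ} : lenSeq (∅ : Finset (Fin n × Fin n)) = fun _ => 0 := by
  funext m
  simp [lenSeq]

lemma lenSeq_peel {n : ℕ} {T : Finset (Fin n × Fin n)} {t : Fin n × Fin n} (ht : t ∈ T)
    (hmax : ∀ q ∈ T, plen q ≤ plen t) :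
    lenSeq T 0 = plen t ∧ ∀ m, lenSeq T (m + 1) = lenSeq (T.erase t) m := by
  have hfun : (fun p : Fin n × Fin n => ((p.2 : ℕ) - (p.1 : ℕ))) = plen (n := n) := rfl
  have hval : T.val = t ::ₘ (T.erase t).val := by
    rw [Finset.erase_val]
    exact (Multiset.cons_erase ht).symm
  have hb : ∀ x ∈ (T.erase t).val.map (plen (n := n)), x ≤ plen t := by
    intro x hx
    obtain ⟨q, hq, rfl⟩ := Multiset.mem_map.mp hx
    exact hmax q (Finset.mem_of_mem_erase (Finset.mem_val.mp hq))
  have main : ∀ m, lenSeq T m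
      = (plen t :: (((T.erase t).val.map (plen (n := n))).sort (· ≤ ·)).reverse).getD m 0 := by
    intro m
    show (((T.val.map fun p => (p.2 : ℕ) - (p.1 : ℕ)).sort (· ≤ ·)).reverse).getD m 0 = _
    rw [hfun, hval, Multiset.map_cons, sort_max_cons hb, List.reverse_append]
    rfl
  refine ⟨by rw [main 0]; rfl, fun m => by rw [main (m + 1)]; rfl⟩

lemma lexGe_step {f g : ℕ → ℕ} (h0 : f 0 = g 0)
    (h : lexGe (fun m => f (m + 1)) (fun m => g (m + 1))) : lexGe f g := by
  rcases h with h | ⟨m, hlt, hs⟩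
  · left; funext m
    cases m with
    | zero => exact h0
    | succ k => exact congrFun h k
  · right
    refine ⟨m + 1, fun i hi => ?_, hs⟩
    cases i with
    | zero => exact h0
    | succ j => exact hlt j (by omega)

lemma main_lex {n : ℕ} {F : Type*} [Field F]
    (P : Set (Fin n × Fin n)) (hP : IsPoset P)
    (lam : Mat n F) (hlam : lam ∈ SPa P)
    (eta : Mat n F)
    (mate : Fin n × Fin n → Fin n × Fin n)
    (hmate : ∀ t : Fin n × Fin n, eta t.1 t.2 ≠ 0 →
      lam (mate t).1 (mate t).2 ≠ 0 ∧ plen t < plen (mate t) ∧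
        ((mate t).1 = t.1 ∨ (mate t).2 = t.2)) :
    ∀ T L : Finset (Fin n × Fin n),
      Indep T → (∀ t ∈ T, (lam + eta) t.1 t.2 ≠ 0) →
      (∀ t ∈ T, lam t.1 t.2 ≠ 0 → t ∈ L) →
      (∀ t ∈ T, eta t.1 t.2 ≠ 0 → mate t ∈ L) →
      (∀ e ∈ L, lam e.1 e.2 ≠ 0) →
      lexGe (lenSeq L) (lenSeq T) := by
  have hplen1 : ∀ e : Fin n × Fin n, lam e.1 e.2 ≠ 0 → 1 ≤ plen e := by
    intro e he
    have heP : e ∈ P := by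
      by_contra h
      exact he (hlam.1 e.1 e.2 h)
    have h2 : (e.1 : ℕ) < (e.2 : ℕ) := hP.1 heP
    simp only [plen]; omega
  intro T
  induction T using Finset.strongInduction with
  | _ T ih =>
  intro L hind hTS hTlam hTeta hL
  rcases T.eq_empty_or_nonempty with rfl | hne
  · rcases L.eq_empty_or_nonempty with rfl | hLne
    · exact Or.inl rfl
    · obtain ⟨e0, he0, hemax⟩ := L.exists_max_image plen hLne
      obtain ⟨h0, -⟩ := lenSeq_peel he0 hemax
      refine Or.inr ⟨0, fun i hi => absurd hi (Nat.not_lt_zero i), ?_⟩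
      rw [h0, lenSeq_empty]
      exact lt_of_lt_of_le Nat.zero_lt_one (hplen1 e0 (hL e0 he0))
  · obtain ⟨t0, ht0, htmax⟩ := T.exists_max_image plen hne
    obtain ⟨hT0, hTsucc⟩ := lenSeq_peel ht0 htmax
    by_cases hη : eta t0.1 t0.2 ≠ 0
    · have hm := hTeta t0 ht0 hη
      obtain ⟨e0, he0, hemax⟩ := L.exists_max_image plen ⟨mate t0, hm⟩
      obtain ⟨hL0, -⟩ := lenSeq_peel he0 hemax
      refine Or.inr ⟨0, fun i hi => absurd hi (Nat.not_lt_zero i), ?_⟩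
      rw [hL0, hT0]
      exact lt_of_lt_of_le (hmate t0 hη).2.1 (hemax _ hm)
    · push_neg at hη
      have hl0 : lam t0.1 t0.2 ≠ 0 := by
        have := hTS t0 ht0
        simpa [Matrix.add_apply, hη] using this
      have ht0L : t0 ∈ L := hTlam t0 ht0 hl0
      by_cases hlt : ∃ e ∈ L, plen t0 < plen e
      · obtain ⟨e1, he1, hlt1⟩ := hlt
        obtain ⟨e0, he0, hemax⟩ := L.exists_max_image plen ⟨e1, he1⟩
        obtain ⟨hL0, -⟩ := lenSeq_peel he0 hemax
        refine Or.inr ⟨0, fun i hi => absurd hi (Nat.not_lt_zero i), ?_⟩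
        rw [hL0, hT0]
        exact lt_of_lt_of_le hlt1 (hemax _ he1)
      · push_neg at hlt
        obtain ⟨hL0, hLsucc⟩ := lenSeq_peel ht0L hlt
        apply lexGe_step (by rw [hL0, hT0])
        have e1 : (fun m => lenSeq L (m + 1)) = lenSeq (L.erase t0) := funext hLsucc
        have e2 : (fun m => lenSeq T (m + 1)) = lenSeq (T.erase t0) := funext hTsucc
        rw [e1, e2]
        apply ih (T.erase t0) (Finset.erase_ssubset ht0) (L.erase t0)
        · intro p hp q hq hpq
          exact hind p (Finset.mem_of_mem_erase hp) q (Finset.mem_of_mem_erase hq) hpq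
        · intro t ht
          exact hTS t (Finset.mem_of_mem_erase ht)
        · intro t ht hl
          exact Finset.mem_erase.mpr ⟨(Finset.mem_erase.mp ht).1,
            hTlam t (Finset.mem_of_mem_erase ht) hl⟩
        · intro t ht hη2
          refine Finset.mem_erase.mpr ⟨?_, hTeta t (Finset.mem_of_mem_erase ht) hη2⟩
          intro hcontra
          obtain ⟨hne1, hne2⟩ := hind t (Finset.mem_of_mem_erase ht) t0 ht0
            (Finset.mem_erase.mp ht).1
          rcases (hmate t hη2).2.2 with h | h
          · exact hne1 (by rw [← h, hcontra])
          · exact hne2 (by rw [← h, hcontra])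
        · intro e he
          exact hL e (Finset.mem_of_mem_erase he)

/-- `supp(λ)` is the highest cover set of the poset `P^{(λ,η)}`
generated by the cover set `supp(λ + η)`. -/
theorem supp_is_highest_cover_set {n : ℕ} {F : Type*} [Field F]
    (P : Set (Fin n × Fin n)) (hP : IsPoset P) (hN : NormalPoset P)
    (lam : Mat n F) (hlam : lam ∈ SPa P)
    (eta : Mat n F) (heta : msupp eta ⊆ coauxF P lam) :
    IsHighestCoverSet (posetOfCovers (msupp (lam + eta))) (msuppF lam) := by
  classical
  obtain ⟨hPup, hPtrans⟩ := hP
  obtain ⟨hnP, hrow, hcol⟩ := hlam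
  have hlamP : ∀ p : Fin n × Fin n, lam p.1 p.2 ≠ 0 → p ∈ P := by
    intro p hp
    by_contra h
    exact hp (hnP p.1 p.2 h)
  have hetaP : ∀ p : Fin n × Fin n, eta p.1 p.2 ≠ 0 → p ∈ P := by
    intro p hp
    rcases (heta (show p ∈ msupp eta from hp)).1 with h | h
    · exact h.1
    · exact h.1
  have hSP : ∀ p : Fin n × Fin n, (lam + eta) p.1 p.2 ≠ 0 → p ∈ P := by
    intro p hp
    by_cases hl : lam p.1 p.2 = 0
    · have hη : eta p.1 p.2 ≠ 0 := by
        intro h0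
        exact hp (by simp [Matrix.add_apply, hl, h0])
      exact hetaP p hη
    · exact hlamP p hl
  have hQP : ∀ a b : Fin n,
      Relation.TransGen (fun a b : Fin n => (a, b) ∈ msupp (lam + eta)) a b → (a, b) ∈ P := by
    intro a b h
    induction h with
    | single h => exact hSP _ h
    | tail _ h2 ih => exact hPtrans _ _ _ ih (hSP _ h2)
  have hdisj : ∀ p : Fin n × Fin n, lam p.1 p.2 ≠ 0 → eta p.1 p.2 = 0 := by
    intro p hl
    by_contra hη
    rcases (heta (show p ∈ msupp eta from hη)).1 with ⟨_, i, hik, hij⟩ | ⟨_, k, hik, hjk⟩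
    · have hcol1 : i = p.1 := hcol i p.1 p.2 hik hl
      have : (i : Fin n) < p.1 := hij
      rw [hcol1] at this
      exact lt_irrefl _ this
    · have hrow1 : k = p.2 := hrow p.1 k p.2 hik hl
      have : (p.2 : Fin n) < k := hjk
      rw [hrow1] at this
      exact lt_irrefl _ this
  have hlamS : ∀ p : Fin n × Fin n, lam p.1 p.2 ≠ 0 → p ∈ msupp (lam + eta) := by
    intro p hl
    show (lam + eta) p.1 p.2 ≠ 0
    simpa [Matrix.add_apply, hdisj p hl] using hl
  -- Part 1: the support of `lam` consists of covers.
  have part1 : ↑(msuppF lam) ⊆ covers (posetOfCovers (msupp (lam + eta))) := by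
    intro p hp
    have hl : lam p.1 p.2 ≠ 0 := by simpa [msuppF] using hp
    refine ⟨Relation.TransGen.single (hlamS p hl), ?_⟩
    rintro ⟨j, hj1, hj2⟩
    obtain ⟨c, hc1, hc2⟩ : ∃ c : Fin n, (p.1, c) ∈ msupp (lam + eta) ∧ (c, p.2) ∈ P := by
      have hj1' : Relation.TransGen (fun a b : Fin n => (a, b) ∈ msupp (lam + eta)) p.1 j := hj1
      have hj2' : Relation.TransGen (fun a b : Fin n => (a, b) ∈ msupp (lam + eta)) j p.2 := hj2
      obtain ⟨c, hc, hrest⟩ := Relation.TransGen.head'_iff.mp hj1'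
      exact ⟨c, hc, hQP _ _ (Relation.TransGen.trans_right hrest hj2')⟩
    by_cases hlc : lam p.1 c = 0
    · have hec : eta p.1 c ≠ 0 := by
        intro h0
        exact hc1 (by simp [Matrix.add_apply, hlc, h0])
      exact (heta (show ((p.1, c) : Fin n × Fin n) ∈ msupp eta from hec)).2
        (Or.inr ⟨hetaP _ hec, p.2, hl, hc2⟩)
    · have : c = p.2 := hrow p.1 c p.2 hlc hl
      have hlt : (c : Fin n) < p.2 := hPup hc2
      rw [this] at hlt
      exact lt_irrefl _ hlt
  -- Part 2: independence.
  have part2 : Indep (msuppF lam) := by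
    intro p hp q hq hne
    have hlp : lam p.1 p.2 ≠ 0 := by simpa [msuppF] using hp
    have hlq : lam q.1 q.2 ≠ 0 := by simpa [msuppF] using hq
    constructor
    · intro h
      apply hne
      have h2 : lam p.1 q.2 ≠ 0 := by rw [h]; exact hlq
      exact Prod.ext h (hrow p.1 p.2 q.2 hlp h2)
    · intro h
      apply hne
      have h2 : lam q.1 p.2 ≠ 0 := by rw [h]; exact hlq
      exact Prod.ext (hcol p.1 q.1 p.2 hlp h2) h
  refine ⟨part1, part2, ?_⟩
  -- Part 3: lexicographic maximality.
  have hcovS : ∀ p ∈ covers (posetOfCovers (msupp (lam + eta))), p ∈ msupp (lam + eta) := by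
    intro p hp
    have hp1 : Relation.TransGen (fun a b : Fin n => (a, b) ∈ msupp (lam + eta)) p.1 p.2 := hp.1
    obtain ⟨c, hc, hrest⟩ := Relation.TransGen.head'_iff.mp hp1
    rcases (Relation.reflTransGen_iff_eq_or_transGen.mp hrest) with h | h
    · rw [← h] at hc
      exact hc
    · exact absurd ⟨c, Relation.TransGen.single hc, h⟩ hp.2
  have hmate_ex : ∀ t : Fin n × Fin n, ∃ e : Fin n × Fin n, eta t.1 t.2 ≠ 0 →
      lam e.1 e.2 ≠ 0 ∧ plen t < plen e ∧ (e.1 = t.1 ∨ e.2 = t.2) := by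
    intro t
    by_cases hη : eta t.1 t.2 ≠ 0
    · rcases (heta (show t ∈ msupp eta from hη)).1 with ⟨htP, i, hik, hij⟩ | ⟨htP, k, hik, hjk⟩
      · refine ⟨(i, t.2), fun _ => ⟨hik, ?_, Or.inr rfl⟩⟩
        have h1 : (i : ℕ) < (t.1 : ℕ) := hij
        have h2 : (t.1 : ℕ) < (t.2 : ℕ) := hPup htP
        simp only [plen]; omega
      · refine ⟨(t.1, k), fun _ => ⟨hik, ?_, Or.inl rfl⟩⟩
        have h1 : (t.2 : ℕ) < (k : ℕ) := hjk
        have h2 : (t.1 : ℕ) < (t.2 : ℕ) := hPup htP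
        simp only [plen]; omega
    · exact ⟨t, fun h => absurd h hη⟩
  choose mate hmate using hmate_ex
  intro T hT hTind
  apply main_lex P ⟨hPup, hPtrans⟩ lam ⟨hnP, hrow, hcol⟩ eta mate hmate T (msuppF lam) hTind
  · intro t ht
    exact hcovS t (hT (Finset.mem_coe.mpr ht))
  · intro t ht hl
    simpa [msuppF] using hl
  · intro t ht hη
    have := (hmate t hη).1
    simpa [msuppF] using this
  · intro e he
    simpa [msuppF] using he
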